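/- Let q be even, let O be an ovoid of PG(3,q), and let ⊥ be the symplectic polarity of PG(3,q) whose absolute lines are exactly the tangent lines of O. If m is a line of PG(3,q) that is not tangent to O, then exactly one of the lines m, m^⊥ is secant to O (meets it in 2 points) and the other is external to O (disjoint from it). -/

import Mathlib

open scoped Classical
open Module

noncomputable section

variable (F : Type) [Field F] [Fintype F]

abbrev V4 := Fin 4 → F

def IsPt (p : Submodule F (V4 F)) : Prop := finrank F p = 1

def IsLn (L : Submodule F (V4 F)) : Prop := finrank F L = 2

def ptsOn (L : Submodule F (V4 F)) : Set (Submodule F (V4 F)) :=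
  {p | IsPt F p ∧ p ≤ L}

def Coll3 (p r s : Submodule F (V4 F)) : Prop :=
  ∃ L, IsLn F L ∧ p ≤ L ∧ r ≤ L ∧ s ≤ L

def IsOvoid (q : ℕ) (O : Set (Submodule F (V4 F))) : Prop :=
  (∀ p ∈ O, IsPt F p) ∧ O.ncard = q ^ 2 + 1 ∧
    ∀ p ∈ O, ∀ r ∈ O, ∀ s ∈ O, p ≠ r → p ≠ s → r ≠ s → ¬ Coll3 F p r s

def TotIso (B : LinearMap.BilinForm F (V4 F)) (L : Submodule F (V4 F)) : Prop :=
  IsLn F L ∧ ∀ x ∈ L, ∀ y ∈ L, B x y = 0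

def Pt := {p : Submodule F (V4 F) // IsPt F p}

def chi (s : Set (Submodule F (V4 F))) : Pt F → ZMod 2 :=
  fun p => if p.1 ∈ s then 1 else 0

def commonTangents (q : ℕ) (θ : Fin (q + 1) → Set (Submodule F (V4 F))) :
    Set (Submodule F (V4 F)) :=
  {L | IsLn F L ∧ ∀ i, (θ i ∩ ptsOn F L).ncard = 1}

def gridSet (B : LinearMap.BilinForm F (V4 F)) (m : Submodule F (V4 F)) :
    Set (Submodule F (V4 F)) :=
  ptsOn F m ∪ ptsOn F (LinearMap.BilinForm.orthogonal B m)

def lineCode (B : LinearMap.BilinForm F (V4 F)) :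
    Submodule (ZMod 2) (Pt F → ZMod 2) :=
  Submodule.span (ZMod 2) {w | ∃ L, TotIso F B L ∧ w = chi F (ptsOn F L)}

def gridCode (B : LinearMap.BilinForm F (V4 F)) :
    Submodule (ZMod 2) (Pt F → ZMod 2) :=
  Submodule.span (ZMod 2)
    {w | ∃ m, IsLn F m ∧ ¬ (∀ x ∈ m, ∀ y ∈ m, B x y = 0) ∧ w = chi F (gridSet F B m)}

set_option linter.unusedSectionVars false

section Aux

open Submodule LinearMap

variable {F : Type} [Field F] [Fintype F]

lemma exists_gen {W : Submodule F (V4 F)} (h : finrank F W = 1) :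
    ∃ v : V4 F, v ≠ 0 ∧ W = Submodule.span F {v} := by
  let b := finBasisOfFinrankEq F W h
  refine ⟨((b 0 : W) : V4 F), by rw [ne_eq, Submodule.coe_eq_zero]; exact Basis.ne_zero b 0, le_antisymm ?_ ?_⟩
  · intro x hx
    have h1 := b.sum_repr ⟨x, hx⟩
    rw [Fin.sum_univ_one] at h1
    rw [Submodule.mem_span_singleton]
    exact ⟨b.repr ⟨x, hx⟩ 0, congrArg Subtype.val h1⟩
  · rw [Submodule.span_le, Set.singleton_subset_iff]
    exact (b 0).2

lemma exists_pair {W : Submodule F (V4 F)} (h : finrank F W = 2) :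
    ∃ u v : V4 F, u ∈ W ∧ v ∈ W ∧ (∀ a b : F, a • u + b • v = 0 → a = 0 ∧ b = 0) ∧
      W = Submodule.span F {u, v} := by
  let b := finBasisOfFinrankEq F W h
  refine ⟨((b 0 : W) : V4 F), ((b 1 : W) : V4 F), (b 0).2, (b 1).2, ?_, le_antisymm ?_ ?_⟩
  · intro a c hac
    have hli := Fintype.linearIndependent_iff.mp b.linearIndependent ![a, c]
    have h0 : (![a, c] 0) • b 0 + (![a, c] 1) • b 1 = 0 := by
      apply Subtype.ext
      simp only [Submodule.coe_add, SetLike.val_smul, Submodule.coe_zero,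
        Matrix.cons_val_zero, Matrix.cons_val_one, Matrix.head_cons]
      exact hac
    have := hli (by rw [Fin.sum_univ_two]; exact h0)
    exact ⟨this 0, this 1⟩
  · intro x hx
    have h1 := b.sum_repr ⟨x, hx⟩
    rw [Fin.sum_univ_two] at h1
    rw [Submodule.mem_span_pair]
    exact ⟨b.repr ⟨x, hx⟩ 0, b.repr ⟨x, hx⟩ 1, congrArg Subtype.val h1⟩
  · rw [Submodule.span_le]
    rintro z (rfl | rfl)
    · exact (b 0).2
    · exact (b 1).2

lemma pt_le_pt {p r : Submodule F (V4 F)} (hp : IsPt F p) (hr : IsPt F r) (h : p ≤ r) :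
    p = r :=
  Submodule.eq_of_le_of_finrank_le h (by rw [hp, hr])

lemma pt_inf_pt {p r : Submodule F (V4 F)} (hp : IsPt F p) (hr : IsPt F r) (hne : p ≠ r) :
    p ⊓ r = ⊥ := by
  by_contra h
  have h0 : finrank F (p ⊓ r : Submodule F (V4 F)) ≠ 0 := by
    rwa [ne_eq, Submodule.finrank_eq_zero]
  have h1 : finrank F (p ⊓ r : Submodule F (V4 F)) ≤ 1 := by
    have := Submodule.finrank_mono (inf_le_left : p ⊓ r ≤ p)
    rwa [hp] at this
  have h2 : IsPt F (p ⊓ r) := by unfold IsPt; omega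
  have h3 : p ⊓ r = p := pt_le_pt h2 hp inf_le_left
  have h4 : p ⊓ r = r := pt_le_pt h2 hr inf_le_right
  exact hne (h3 ▸ h4)

lemma sup_pt_pt {p r : Submodule F (V4 F)} (hp : IsPt F p) (hr : IsPt F r) (hne : p ≠ r) :
    IsLn F (p ⊔ r) := by
  have := Submodule.finrank_sup_add_finrank_inf_eq p r
  rw [pt_inf_pt hp hr hne, finrank_bot, hp, hr] at this
  unfold IsLn; omega

lemma ptsOn_point {p : Submodule F (V4 F)} (hp : IsPt F p) : ptsOn F p = {p} := by
  ext r
  constructor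
  · rintro ⟨hr, hle⟩; exact pt_le_pt hr hp hle
  · rintro rfl; exact ⟨hp, le_rfl⟩

lemma card_ptsOn_line {W : Submodule F (V4 F)} (hW : IsLn F W) :
    (ptsOn F W).ncard = Fintype.card F + 1 := by
  classical
  obtain ⟨u, v, hu, hv, hli, hsp⟩ := exists_pair hW
  have hvne : v ≠ 0 := by
    intro h
    have := (hli 0 1 (by rw [h]; simp)).2
    exact one_ne_zero this
  have huc : ∀ c : F, u + c • v ≠ 0 := by
    intro c h
    have := (hli 1 c (by rw [one_smul]; exact h)).1
    exact one_ne_zero this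
  set f : Option F → Submodule F (V4 F) :=
    fun o => Option.rec (Submodule.span F {v}) (fun c => Submodule.span F {u + c • v}) o with hf
  have himg : ptsOn F W = f '' Set.univ := by
    ext s
    constructor
    · rintro ⟨hs, hle⟩
      obtain ⟨w, hw0, rfl⟩ := exists_gen hs
      have hwW : w ∈ W := hle (Submodule.mem_span_singleton_self w)
      rw [hsp, Submodule.mem_span_pair] at hwW
      obtain ⟨a, c, hac⟩ := hwW
      by_cases ha : a = 0
      · refine ⟨none, Set.mem_univ _, ?_⟩
        have hc : c ≠ 0 := by
          intro hc; rw [ha, hc, zero_smul, zero_smul, zero_add] at hac; exact hw0 hac.symm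
        show Submodule.span F {v} = Submodule.span F {w}
        rw [← hac, ha, zero_smul, zero_add]
        exact (Submodule.span_singleton_smul_eq (IsUnit.mk0 c hc) v).symm
      · refine ⟨some (a⁻¹ * c), Set.mem_univ _, ?_⟩
        show Submodule.span F {u + (a⁻¹ * c) • v} = Submodule.span F {w}
        have : u + (a⁻¹ * c) • v = a⁻¹ • w := by
          rw [← hac, smul_add, smul_smul, smul_smul, inv_mul_cancel₀ ha, one_smul]
        rw [this, Submodule.span_singleton_smul_eq (IsUnit.mk0 a⁻¹ (inv_ne_zero ha)) w]
    · rintro ⟨o, -, rfl⟩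
      cases o with
      | none =>
          exact ⟨finrank_span_singleton hvne,
            by rw [Submodule.span_le, Set.singleton_subset_iff]; exact hv⟩
      | some c =>
          refine ⟨finrank_span_singleton (huc c), ?_⟩
          rw [Submodule.span_le, Set.singleton_subset_iff]
          exact W.add_mem hu (W.smul_mem c hv)
  have hinj : Set.InjOn f Set.univ := by
    intro o1 _ o2 _ heq
    have key : ∀ c : F, ¬ (Submodule.span F {v} = Submodule.span F {u + c • v}) := by
      intro c hcontra
      have : u + c • v ∈ Submodule.span F {v} :=
        hcontra ▸ Submodule.mem_span_singleton_self _
      rw [Submodule.mem_span_singleton] at this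
      obtain ⟨t, ht⟩ := this
      have : (1 : F) • u + (c - t) • v = 0 := by
        linear_combination (norm := module) -ht
      exact one_ne_zero (hli 1 (c - t) this).1
    match o1, o2 with
    | none, none => rfl
    | none, some c => exact absurd heq (key c)
    | some c, none => exact absurd heq.symm (key c)
    | some c, some c' =>
        have heq' : Submodule.span F {u + c • v} = Submodule.span F {u + c' • v} := heq
        have : u + c • v ∈ Submodule.span F {u + c' • v} :=
          heq' ▸ Submodule.mem_span_singleton_self _
        rw [Submodule.mem_span_singleton] at this
        obtain ⟨t, ht⟩ := this
        have hexp : (t - 1) • u + (t * c' - c) • v = 0 := by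
          linear_combination (norm := module) ht
        obtain ⟨h1, h2⟩ := hli _ _ hexp
        have ht1 : t = 1 := by linear_combination h1
        congr 1
        have : c' - c = 0 := by rw [ht1, one_mul] at h2; linear_combination h2
        linear_combination -this
  rw [himg, Set.ncard_image_of_injOn hinj, Set.ncard_univ, Nat.card_eq_fintype_card,
    Fintype.card_option]

end Aux
section Aux2

open Submodule LinearMap

variable {F : Type} [Field F] [Fintype F] {B : LinearMap.BilinForm F (V4 F)}

lemma finrank_V4 : finrank F (V4 F) = 4 := by simp [Module.finrank_pi]

lemma pt_le_orth (halt : ∀ w, B w w = 0) {p : Submodule F (V4 F)} (hp : IsPt F p) :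
    p ≤ B.orthogonal p := by
  obtain ⟨w, hw0, rfl⟩ := exists_gen hp
  intro x hx
  rw [LinearMap.BilinForm.mem_orthogonal_iff]
  intro y hy
  rw [Submodule.mem_span_singleton] at hx hy
  obtain ⟨a, rfl⟩ := hx
  obtain ⟨c, rfl⟩ := hy
  show B (c • w) (a • w) = 0
  simp only [map_smul, LinearMap.smul_apply, smul_eq_mul, halt w]
  ring

lemma le_orth_comm (hrefl : B.IsRefl) {N M : Submodule F (V4 F)} :
    N ≤ B.orthogonal M ↔ M ≤ B.orthogonal N := by
  constructor <;>
  · intro h x hx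
    rw [LinearMap.BilinForm.mem_orthogonal_iff]
    intro n hn
    exact hrefl _ _ ((LinearMap.BilinForm.mem_orthogonal_iff.mp (h hn)) x hx)

lemma ti_of_pt_le (halt : ∀ w, B w w = 0) {p L : Submodule F (V4 F)}
    (hp : IsPt F p) (hL : IsLn F L) (h1 : p ≤ L) (h2 : L ≤ B.orthogonal p) :
    ∀ x ∈ L, ∀ y ∈ L, B x y = 0 := by
  have hrefl : B.IsRefl := LinearMap.IsAlt.isRefl halt
  obtain ⟨u, v, hu, hv, hli, hsp⟩ := exists_pair hL
  suffices huv : B u v = 0 by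
    have hvu : B v u = 0 := hrefl _ _ huv
    intro x hx y hy
    rw [hsp, Submodule.mem_span_pair] at hx hy
    obtain ⟨a, b, rfl⟩ := hx
    obtain ⟨c, d, rfl⟩ := hy
    simp only [map_add, map_smul, LinearMap.add_apply, LinearMap.smul_apply, smul_eq_mul,
      halt u, halt v, huv, hvu]
    ring
  obtain ⟨w, hw0, hpw⟩ := exists_gen hp
  have hwp : w ∈ p := hpw ▸ Submodule.mem_span_singleton_self w
  have hwL : w ∈ L := h1 hwp
  have hw_orth : ∀ y ∈ L, B w y = 0 := fun y hy =>
    (LinearMap.BilinForm.mem_orthogonal_iff.mp (h2 hy)) w hwp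
  rw [hsp, Submodule.mem_span_pair] at hwL
  obtain ⟨a, b, hab⟩ := hwL
  have hwu : B w u = 0 := hw_orth u hu
  have hwv : B w v = 0 := hw_orth v hv
  rw [← hab] at hwu hwv
  simp only [map_add, map_smul, LinearMap.add_apply, LinearMap.smul_apply, smul_eq_mul,
    halt u, halt v] at hwu hwv
  -- hwu : a * 0 + b * B v u = 0 ; hwv : a * B u v + b * 0 = 0
  by_cases ha : a = 0
  · have hb : b ≠ 0 := by
      intro hb; rw [ha, hb, zero_smul, zero_smul, zero_add] at hab; exact hw0 hab.symm
    have h2' : b * B v u = 0 := by linear_combination hwu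
    exact hrefl _ _ ((mul_eq_zero.mp h2').resolve_left hb)
  · have h2' : a * B u v = 0 := by linear_combination hwv
    exact (mul_eq_zero.mp h2').resolve_left ha

/-- Any point `p` lies in its polar plane, which is 3-dimensional. -/
lemma orth_pt_finrank (hnd : B.Nondegenerate) (hrefl : B.IsRefl)
    {p : Submodule F (V4 F)} (hp : IsPt F p) :
    finrank F (B.orthogonal p) = 3 := by
  rw [LinearMap.BilinForm.finrank_orthogonal hnd, finrank_V4, hp]

/-- a 2-dimensional complement of a point inside its polar plane -/
lemma exists_compl_in (π p : Submodule F (V4 F)) (hple : p ≤ π)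
    (hp : IsPt F p) (hπ : finrank F π = 3) :
    ∃ l, IsLn F l ∧ l ≤ π ∧ p ⊓ l = ⊥ ∧ p ⊔ l = π := by
  obtain ⟨c, hc⟩ := Submodule.exists_isCompl (Submodule.comap π.subtype p)
  refine ⟨Submodule.map π.subtype c, ?_, ?_, ?_, ?_⟩
  · have hmapp : Submodule.map π.subtype (Submodule.comap π.subtype p) = p := by
      rw [Submodule.map_comap_subtype, inf_eq_right.mpr hple]
    have hsup : p ⊔ Submodule.map π.subtype c = π := by
      rw [← hmapp, ← Submodule.map_sup, hc.sup_eq_top, Submodule.map_subtype_top]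
    have hinf : p ⊓ Submodule.map π.subtype c = ⊥ := by
      rw [← hmapp, ← Submodule.map_inf _ (Submodule.injective_subtype π), hc.inf_eq_bot,
        Submodule.map_bot]
    have := Submodule.finrank_sup_add_finrank_inf_eq p (Submodule.map π.subtype c)
    rw [hsup, hinf, hπ, hp, finrank_bot] at this
    unfold IsLn; omega
  · exact Submodule.map_subtype_le π c
  · have hmapp : Submodule.map π.subtype (Submodule.comap π.subtype p) = p := by
      rw [Submodule.map_comap_subtype, inf_eq_right.mpr hple]
    rw [← hmapp, ← Submodule.map_inf _ (Submodule.injective_subtype π), hc.inf_eq_bot,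
      Submodule.map_bot]
  · have hmapp : Submodule.map π.subtype (Submodule.comap π.subtype p) = p := by
      rw [Submodule.map_comap_subtype, inf_eq_right.mpr hple]
    rw [← hmapp, ← Submodule.map_sup, hc.sup_eq_top, Submodule.map_subtype_top]

end Aux2
section Aux3

open Submodule LinearMap

variable {F : Type} [Field F] [Fintype F] {B : LinearMap.BilinForm F (V4 F)}

lemma pt_ne_of_le_compl {p l s : Submodule F (V4 F)} (hs : IsPt F s) (hsl : s ≤ l)
    (hinf : p ⊓ l = ⊥) : s ≠ p := by
  intro h
  have h1 : p ≤ p ⊓ l := le_inf le_rfl (h ▸ hsl)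
  rw [hinf, le_bot_iff] at h1
  rw [h, h1] at hs
  unfold IsPt at hs
  rw [finrank_bot] at hs
  omega

/-- The section of the ovoid by the polar plane of a point `p` has 1 point if `p ∈ O`
and `q+1` points otherwise. -/
lemma planeCount (O : Set (Submodule F (V4 F))) (hO1 : ∀ r ∈ O, IsPt F r)
    (halt : ∀ w, B w w = 0) (hnd : B.Nondegenerate)
    (htan : ∀ L, IsLn F L →
      ((O ∩ ptsOn F L).ncard = 1 ↔ ∀ x ∈ L, ∀ y ∈ L, B x y = 0))
    {p : Submodule F (V4 F)} (hp : IsPt F p) :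
    (O ∩ ptsOn F (B.orthogonal p)).ncard
      = if p ∈ O then 1 else Fintype.card F + 1 := by
  classical
  have hrefl : B.IsRefl := LinearMap.IsAlt.isRefl halt
  set π := B.orthogonal p with hπdef
  have hπ3 : finrank F π = 3 := orth_pt_finrank hnd hrefl hp
  have hpπ : p ≤ π := pt_le_orth halt hp
  -- every line through p inside π carries exactly one point of O
  have key : ∀ L, IsLn F L → p ≤ L → L ≤ π → ∃ r, O ∩ ptsOn F L = {r} := by
    intro L hL h1 h2
    exact Set.ncard_eq_one.mp ((htan L hL).mpr (ti_of_pt_le halt hp hL h1 h2))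
  by_cases hpO : p ∈ O
  · rw [if_pos hpO]
    have : O ∩ ptsOn F π = {p} := by
      apply Set.eq_singleton_iff_unique_mem.mpr
      refine ⟨⟨hpO, hp, hpπ⟩, ?_⟩
      rintro r ⟨hrO, hrpt, hrle⟩
      by_contra hne
      have hL : IsLn F (p ⊔ r) := sup_pt_pt hp hrpt (Ne.symm hne)
      obtain ⟨x, hx⟩ := key (p ⊔ r) hL le_sup_left (sup_le hpπ hrle)
      have h1 : p ∈ O ∩ ptsOn F (p ⊔ r) := ⟨hpO, hp, le_sup_left⟩
      have h2 : r ∈ O ∩ ptsOn F (p ⊔ r) := ⟨hrO, hrpt, le_sup_right⟩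
      rw [hx] at h1 h2
      exact hne (h2.trans h1.symm)
    rw [this, Set.ncard_singleton]
  · rw [if_neg hpO]
    obtain ⟨l, hl, hlπ, hinf, hsup⟩ := exists_compl_in π p hpπ hp hπ3
    -- basic dimension facts for lines through p in π
    have hLl : ∀ L, IsLn F L → p ≤ L → L ≤ π → IsPt F (L ⊓ l) := by
      intro L hL h1 h2
      have hsupLl : L ⊔ l = π := by
        apply le_antisymm (sup_le h2 hlπ)
        rw [← hsup]
        exact sup_le (le_trans h1 le_sup_left) le_sup_right
      have := Submodule.finrank_sup_add_finrank_inf_eq L l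
      rw [hsupLl, hπ3, hL, hl] at this
      unfold IsPt; omega
    -- the map r ↦ (p ⊔ r) ⊓ l
    set φ : Submodule F (V4 F) → Submodule F (V4 F) := fun r => (p ⊔ r) ⊓ l with hφ
    have hmem : ∀ r ∈ O ∩ ptsOn F π, IsLn F (p ⊔ r) ∧ (p ⊔ r) ≤ π ∧ IsPt F (φ r) := by
      rintro r ⟨hrO, hrpt, hrle⟩
      have hne : p ≠ r := fun h => hpO (h ▸ hrO)
      have hL : IsLn F (p ⊔ r) := sup_pt_pt hp hrpt hne
      have hle : p ⊔ r ≤ π := sup_le hpπ hrle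
      exact ⟨hL, hle, hLl _ hL le_sup_left hle⟩
    have hinj : Set.InjOn φ (O ∩ ptsOn F π) := by
      rintro r1 hr1 r2 hr2 heq
      obtain ⟨hL1, hle1, hpt1⟩ := hmem r1 hr1
      obtain ⟨hL2, hle2, hpt2⟩ := hmem r2 hr2
      have hsne : φ r1 ≠ p := pt_ne_of_le_compl hpt1 inf_le_right hinf
      have hsupeq : ∀ {r : Submodule F (V4 F)}, IsLn F (p ⊔ r) → IsPt F (φ r) →
          p ⊔ φ r = p ⊔ r := by
        intro r hLr hptr
        apply Submodule.eq_of_le_of_finrank_le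
        · exact sup_le le_sup_left (le_trans inf_le_left le_rfl)
        · rw [hLr, (sup_pt_pt hp hptr (Ne.symm (pt_ne_of_le_compl hptr inf_le_right hinf)))]
      have hLeq : p ⊔ r1 = p ⊔ r2 := by
        rw [← hsupeq hL1 hpt1, heq, hsupeq hL2 hpt2]
      obtain ⟨x, hx⟩ := key (p ⊔ r1) hL1 le_sup_left hle1
      have h1 : r1 ∈ O ∩ ptsOn F (p ⊔ r1) := ⟨hr1.1, hr1.2.1, le_sup_right⟩
      have h2 : r2 ∈ O ∩ ptsOn F (p ⊔ r1) := by
        rw [hLeq]; exact ⟨hr2.1, hr2.2.1, le_sup_right⟩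
      rw [hx] at h1 h2
      exact h1.trans h2.symm
    have himg : φ '' (O ∩ ptsOn F π) = ptsOn F l := by
      apply Set.Subset.antisymm
      · rintro s ⟨r, hr, rfl⟩
        exact ⟨(hmem r hr).2.2, inf_le_right⟩
      · rintro s ⟨hspt, hsl⟩
        have hsne : s ≠ p := pt_ne_of_le_compl hspt hsl hinf
        have hL : IsLn F (p ⊔ s) := sup_pt_pt hp hspt (Ne.symm hsne)
        have hLπ : p ⊔ s ≤ π := sup_le hpπ (le_trans hsl hlπ)
        obtain ⟨x, hx⟩ := key (p ⊔ s) hL le_sup_left hLπ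
        have hxmem : x ∈ O ∩ ptsOn F (p ⊔ s) := hx ▸ rfl
        obtain ⟨hxO, hxpt, hxle⟩ := hxmem
        have hxπ : x ∈ O ∩ ptsOn F π := ⟨hxO, hxpt, le_trans hxle hLπ⟩
        refine ⟨x, hxπ, ?_⟩
        have hxp : p ≠ x := fun h => hpO (h ▸ hxO)
        have hsup2 : p ⊔ x = p ⊔ s :=
          Submodule.eq_of_le_of_finrank_le (sup_le le_sup_left hxle)
            (by rw [hL, sup_pt_pt hp hxpt hxp])
        have hps : IsPt F (φ x) := by
          rw [hφ]
          dsimp only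
          rw [hsup2]
          exact hLl _ hL le_sup_left hLπ
        have hsle : s ≤ φ x := by
          rw [hφ]; dsimp only; rw [hsup2]; exact le_inf le_sup_right hsl
        exact (pt_le_pt hspt hps hsle).symm
    rw [← card_ptsOn_line hl, ← himg, Set.ncard_image_of_injOn hinj]

end Aux3
section Aux4

open Submodule LinearMap

variable {F : Type} [Field F] [Fintype F]

lemma ovoid_line_le_two {O : Set (Submodule F (V4 F))}
    (h3 : ∀ p ∈ O, ∀ r ∈ O, ∀ s ∈ O, p ≠ r → p ≠ s → r ≠ s → ¬ Coll3 F p r s)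
    {L : Submodule F (V4 F)} (hL : IsLn F L) : (O ∩ ptsOn F L).ncard ≤ 2 := by
  by_contra hcon
  push_neg at hcon
  set s := O ∩ ptsOn F L with hs
  have hfin : s.Finite := Set.toFinite _
  obtain ⟨a, ha⟩ : s.Nonempty := Set.nonempty_of_ncard_ne_zero (by omega)
  have h1 : (s \ {a}).ncard = s.ncard - 1 := Set.ncard_diff_singleton_of_mem ha
  obtain ⟨b, hb⟩ : (s \ {a}).Nonempty := Set.nonempty_of_ncard_ne_zero (by omega)
  have h2 : ((s \ {a}) \ {b}).ncard = (s \ {a}).ncard - 1 :=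
    Set.ncard_diff_singleton_of_mem hb
  obtain ⟨c, hc⟩ : ((s \ {a}) \ {b}).Nonempty := Set.nonempty_of_ncard_ne_zero (by omega)
  obtain ⟨hbs, hba⟩ := hb
  obtain ⟨⟨hcs, hca⟩, hcb⟩ := hc
  have hane : a ≠ b := fun h => hba (by simp [h.symm])
  have hane2 : a ≠ c := fun h => hca (by simp [h.symm])
  have hbne : b ≠ c := fun h => hcb (by simp [h.symm])
  exact h3 a ha.1 b hbs.1 c hcs.1 hane hane2 hbne
    ⟨L, hL, ha.2.2, hbs.2.2, hcs.2.2⟩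

end Aux4
theorem stmt5 (q : ℕ) (hq : Fintype.card F = q) (n : ℕ) (hn : 1 ≤ n)
    (hqn : q = 2 ^ n)
    (O : Set (Submodule F (V4 F))) (hO : IsOvoid F q O)
    (B : LinearMap.BilinForm F (V4 F))
    (halt : ∀ v, B v v = 0) (hnd : B.Nondegenerate)
    (htan : ∀ L, IsLn F L →
      ((O ∩ ptsOn F L).ncard = 1 ↔ ∀ x ∈ L, ∀ y ∈ L, B x y = 0))
    (m : Submodule F (V4 F)) (hm : IsLn F m)
    (hmt : (O ∩ ptsOn F m).ncard ≠ 1) :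
    ((O ∩ ptsOn F m).ncard = 2 ∧
      (O ∩ ptsOn F (LinearMap.BilinForm.orthogonal B m)).ncard = 0) ∨
    ((O ∩ ptsOn F m).ncard = 0 ∧
      (O ∩ ptsOn F (LinearMap.BilinForm.orthogonal B m)).ncard = 2) := by
  classical
  obtain ⟨hO1, hOcard, hO3⟩ := hO
  obtain ⟨Q, hQ⟩ : ∃ t, Fintype.card F = t := ⟨_, rfl⟩
  have hQ1 : 1 ≤ Q := hQ ▸ Fintype.card_pos
  have hrefl : B.IsRefl := LinearMap.IsAlt.isRefl halt
  have hm2' : finrank F ((LinearMap.BilinForm.orthogonal B m : Submodule F (V4 F))) = 2 := by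
    rw [LinearMap.BilinForm.finrank_orthogonal hnd, finrank_V4]
    have hm' : finrank F m = 2 := hm
    rw [hm']
  set mp := LinearMap.BilinForm.orthogonal B m with hmp
  have hm2 : IsLn F mp := hm2'
  have hoo : LinearMap.BilinForm.orthogonal B mp = m :=
    LinearMap.BilinForm.orthogonal_orthogonal hnd hrefl m
  have hmnt : ¬ ∀ x ∈ m, ∀ y ∈ m, B x y = 0 := fun h => hmt ((htan m hm).mpr h)
  have hmpnt : ¬ ∀ x ∈ mp, ∀ y ∈ mp, B x y = 0 := by
    intro h
    apply hmnt
    have h1 : mp ≤ LinearMap.BilinForm.orthogonal B mp := fun x hx =>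
      LinearMap.BilinForm.mem_orthogonal_iff.mpr (fun z hz => h z hz x hx)
    rw [hoo] at h1
    have heq : mp = m := Submodule.eq_of_le_of_finrank_le h1 (by rw [hm2, hm])
    intro x hx y hy
    rw [← heq, hmp] at hy
    exact LinearMap.BilinForm.mem_orthogonal_iff.mp hy x hx
  have hb1 : (O ∩ ptsOn F mp).ncard ≠ 1 := fun h => hmpnt ((htan mp hm2).mp h)
  have ha2 : (O ∩ ptsOn F m).ncard ≤ 2 := ovoid_line_le_two hO3 hm
  have hb2 : (O ∩ ptsOn F mp).ncard ≤ 2 := ovoid_line_le_two hO3 hm2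
  -- double counting setup
  have hfinO : O.Finite := Set.toFinite _
  have hfinT : (ptsOn F mp).Finite := Set.toFinite _
  set T := hfinT.toFinset with hT
  set Ofin := hfinO.toFinset with hOf
  have hbr : ∀ (X : Set (Submodule F (V4 F))) (hX : X.Finite)
      (Y : Set (Submodule F (V4 F))),
      (hX.toFinset.filter (fun z => z ∈ Y)).card = (X ∩ Y).ncard := by
    intro X hX Y
    rw [Set.ncard_eq_toFinset_card (X ∩ Y) (hX.inter_of_left Y)]
    apply congrArg Finset.card
    ext z
    simp only [Finset.mem_filter, Set.Finite.mem_toFinset]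
    exact Iff.rfl
  have hswap : ∑ p ∈ T, (Ofin.filter (fun r => r ∈ ptsOn F (LinearMap.BilinForm.orthogonal B p))).card
      = ∑ r ∈ Ofin, (T.filter (fun p => r ∈ ptsOn F (LinearMap.BilinForm.orthogonal B p))).card := by
    simp only [Finset.card_filter]
    rw [Finset.sum_comm]
  have hLHSterm : ∀ p ∈ T,
      (Ofin.filter (fun r => r ∈ ptsOn F (LinearMap.BilinForm.orthogonal B p))).card
        = if p ∈ O then 1 else Q + 1 := by
    intro p hpT
    rw [hbr O hfinO (ptsOn F (LinearMap.BilinForm.orthogonal B p))]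
    have hppt : IsPt F p := (hfinT.mem_toFinset.mp hpT).1
    rw [planeCount O hO1 halt hnd htan hppt, hQ]
  have hRHSterm : ∀ r ∈ Ofin,
      (T.filter (fun p => r ∈ ptsOn F (LinearMap.BilinForm.orthogonal B p))).card
        = if r ∈ ptsOn F m then Q + 1 else 1 := by
    intro r hrOf
    have hrO : r ∈ O := hfinO.mem_toFinset.mp hrOf
    have hrpt : IsPt F r := hO1 r hrO
    have hr3 : finrank F (LinearMap.BilinForm.orthogonal B r) = 3 :=
      orth_pt_finrank hnd hrefl hrpt
    have hfe : T.filter (fun p => r ∈ ptsOn F (LinearMap.BilinForm.orthogonal B p))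
        = (Set.toFinite (ptsOn F (mp ⊓ LinearMap.BilinForm.orthogonal B r))).toFinset := by
      ext p
      simp only [Finset.mem_filter, hT, Set.Finite.mem_toFinset]
      constructor
      · rintro ⟨⟨hppt, hple⟩, hrpp⟩
        exact ⟨hppt, le_inf hple ((le_orth_comm hrefl).mp hrpp.2)⟩
      · rintro ⟨hppt, hple⟩
        exact ⟨⟨hppt, le_trans hple inf_le_left⟩,
          ⟨hrpt, (le_orth_comm hrefl).mp (le_trans hple inf_le_right)⟩⟩
    rw [hfe, ← Set.ncard_eq_toFinset_card _ _]
    by_cases hrm : r ≤ m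
    · rw [if_pos ⟨hrpt, hrm⟩]
      have hinf : mp ⊓ LinearMap.BilinForm.orthogonal B r = mp :=
        inf_eq_left.mpr (LinearMap.BilinForm.orthogonal_le hrm)
      rw [hinf, card_ptsOn_line hm2, hQ]
    · rw [if_neg (fun hc => hrm hc.2)]
      have hnle : ¬ mp ≤ LinearMap.BilinForm.orthogonal B r := by
        intro hle
        apply hrm
        have h2 : r ≤ LinearMap.BilinForm.orthogonal B mp := (le_orth_comm hrefl).mp hle
        rwa [hoo] at h2
      have hlt : LinearMap.BilinForm.orthogonal B r
          < mp ⊔ LinearMap.BilinForm.orthogonal B r := by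
        rcases lt_or_eq_of_le
          (le_sup_right : LinearMap.BilinForm.orthogonal B r
            ≤ mp ⊔ LinearMap.BilinForm.orthogonal B r) with h | h
        · exact h
        · exact absurd (h ▸ (le_sup_left : mp ≤ mp ⊔ LinearMap.BilinForm.orthogonal B r)) hnle
      have h4 : finrank F (mp ⊔ LinearMap.BilinForm.orthogonal B r : Submodule F (V4 F)) = 4 := by
        have hlt4 := Submodule.finrank_lt_finrank_of_lt hlt
        have hle4 := Submodule.finrank_le (mp ⊔ LinearMap.BilinForm.orthogonal B r)
        rw [finrank_V4] at hle4
        omega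
      have hdim := Submodule.finrank_sup_add_finrank_inf_eq mp
        (LinearMap.BilinForm.orthogonal B r)
      rw [h4, hm2, hr3] at hdim
      have hptinf : IsPt F (mp ⊓ LinearMap.BilinForm.orthogonal B r) := by
        unfold IsPt; omega
      rw [ptsOn_point hptinf, Set.ncard_singleton]
  -- the grand equation
  have hETchain :
      ∑ p ∈ T, (if p ∈ O then 1 else Q + 1)
        = ∑ r ∈ Ofin, (if r ∈ ptsOn F m then Q + 1 else 1) := by
    rw [← Finset.sum_congr rfl hLHSterm, hswap, Finset.sum_congr rfl hRHSterm]
  rw [Finset.sum_ite, Finset.sum_ite] at hETchain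
  rw [Finset.sum_const, Finset.sum_const, Finset.sum_const, Finset.sum_const] at hETchain
  simp only [smul_eq_mul] at hETchain
  set c1 := (T.filter (fun p => p ∈ O)).card with hc1
  set c2 := (T.filter (fun p => ¬ p ∈ O)).card with hc2
  set d1 := (Ofin.filter (fun r => r ∈ ptsOn F m)).card with hd1
  set d2 := (Ofin.filter (fun r => ¬ r ∈ ptsOn F m)).card with hd2
  have hc1b : c1 = (O ∩ ptsOn F mp).ncard := by
    rw [hc1, hbr (ptsOn F mp) hfinT O, Set.inter_comm]
  have hd1a : d1 = (O ∩ ptsOn F m).ncard := by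
    rw [hd1, hbr O hfinO (ptsOn F m)]
  have hcsum : c1 + c2 = Q + 1 := by
    rw [hc1, hc2, Finset.card_filter_add_card_filter_not]
    rw [hT, ← Set.ncard_eq_toFinset_card _ _, card_ptsOn_line hm2, hQ]
  have hdsum : d1 + d2 = Q ^ 2 + 1 := by
    rw [hd1, hd2, Finset.card_filter_add_card_filter_not]
    have hqQ : q = Q := by rw [← hq, hQ]
    rw [hOf, ← Set.ncard_eq_toFinset_card _ _, hOcard, hqQ]
  clear_value c1 c2 d1 d2
  clear hbr hswap hLHSterm hRHSterm hc1 hc2 hd1 hd2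
  -- case analysis
  set a := (O ∩ ptsOn F m).ncard
  set b := (O ∩ ptsOn F mp).ncard
  have haor : a = 0 ∨ a = 2 := by omega
  have hbor : b = 0 ∨ b = 2 := by omega
  rcases haor with ha | ha <;> rcases hbor with hb | hb
  · -- a = 0, b = 0 : contradiction
    exfalso
    have e1 : c1 = 0 := by omega
    have e2 : d1 = 0 := by omega
    have e3 : c2 = Q + 1 := by omega
    have e4 : d2 = Q ^ 2 + 1 := by omega
    rw [e1, e2, e3, e4] at hETchain
    ring_nf at hETchain
    linarith [hETchain, hQ1]
  · exact Or.inr ⟨ha, hb⟩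
  · exact Or.inl ⟨ha, hb⟩
  · -- a = 2, b = 2 : contradiction
    exfalso
    have e1 : c1 = 2 := by omega
    have e2 : d1 = 2 := by omega
    have e5 : Q = c2 + 1 := by omega
    have e4 : d2 + 2 = Q ^ 2 + 1 := by omega
    rw [e1, e2, e5] at hETchain
    rw [e5] at e4
    ring_nf at hETchain e4
    linarith [hETchain, e4]
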